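/- The linear map τ: L → R defined on basis elements by τ(L_{m,i}) = (1/2)L_{2m,i} and τ(G_{r,j}) = (1/√2)G_{2r,j} is an injective homomorphism of Lie superalgebras from the Neveu-Schwarz-Block algebra to the Ramond-Block algebra; i.e., τ([L_{m,i}, L_{n,j}]) = [τ(L_{m,i}), τ(L_{n,j})], τ([L_{m,i}, G_{r,j}]) = [τ(L_{m,i}), τ(G_{r,j})], and τ([G_{l,i}, G_{r,j}]) = [τ(G_{l,i}), τ(G_{r,j})]. -/

import Mathlib

/-- The free `ℂ`-vector space with basis indexed by `ℤ × ℤ₊`; it models both the even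
part (basis `L_{m,i}`) and the odd part (basis `G_{l,j}`, where for the
Neveu-Schwarz-Block algebra the index `k ∈ ℤ` stands for `l = k + 1/2 ∈ 1/2 + ℤ`). -/
abbrev BlockSpan : Type := (ℤ × ℕ) →₀ ℂ

/-- Basis element with index `(m, i)`. -/
noncomputable def bs (m : ℤ) (i : ℕ) : BlockSpan := Finsupp.single (m, i) 1

/-- The linear map `τ` on even parts: `L_{m,i} ↦ (1/2) L_{2m,i}`. -/
noncomputable def tau0 : BlockSpan →ₗ[ℂ] BlockSpan :=
  (1 / 2 : ℂ) • Finsupp.lmapDomain ℂ ℂ (fun p : ℤ × ℕ => (2 * p.1, p.2))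

/-- The linear map `τ` on odd parts: `G_{k+1/2,j} ↦ (1/√2) G_{2k+1,j}`
(odd NSB indices `r = k + 1/2` are encoded by `k ∈ ℤ`, odd RB indices by `ℤ`). -/
noncomputable def tau1 : BlockSpan →ₗ[ℂ] BlockSpan :=
  ((Real.sqrt 2 : ℂ))⁻¹ • Finsupp.lmapDomain ℂ ℂ (fun p : ℤ × ℕ => (2 * p.1 + 1, p.2))

lemma sqrt2_ne : ((Real.sqrt 2 : ℝ) : ℂ) ≠ 0 := by
  exact_mod_cast (Real.sqrt_pos.mpr (by norm_num)).ne'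

lemma sqrt2_sq : ((Real.sqrt 2 : ℝ) : ℂ) * ((Real.sqrt 2 : ℝ) : ℂ) = 2 := by
  rw [← Complex.ofReal_mul, Real.mul_self_sqrt (by norm_num)]
  norm_num

lemma tau0_bs (m : ℤ) (i : ℕ) : tau0 (bs m i) = (1 / 2 : ℂ) • bs (2 * m) i := by
  simp [tau0, bs, Finsupp.mapDomain_single]

lemma tau1_bs (m : ℤ) (i : ℕ) :
    tau1 (bs m i) = ((Real.sqrt 2 : ℂ))⁻¹ • bs (2 * m + 1) i := by
  simp [tau1, bs, Finsupp.mapDomain_single]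

/-- The linear map `τ : L → R`, `τ(L_{m,i}) = (1/2)L_{2m,i}`, `τ(G_{r,j}) = (1/√2)G_{2r,j}`,
is an injective homomorphism of Lie superalgebras from the Neveu-Schwarz-Block algebra to
the Ramond-Block algebra: it is injective and intertwines all three brackets on basis
elements. Here `bL00, bL01, bL11` (resp. `bR00, bR01, bR11`) are the bilinear brackets of
the NSB (resp. RB) algebra, prescribed on basis elements by the structure constants of
Definition 1.1. -/
theorem tau_injective_superalgebra_hom (q : ℂ) (hq : q ≠ 0)
    (bL00 bR00 : BlockSpan →ₗ[ℂ] BlockSpan →ₗ[ℂ] BlockSpan)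
    (bL01 bR01 : BlockSpan →ₗ[ℂ] BlockSpan →ₗ[ℂ] BlockSpan)
    (bL11 bR11 : BlockSpan →ₗ[ℂ] BlockSpan →ₗ[ℂ] BlockSpan)
    (hR00 : ∀ (m n : ℤ) (i j : ℕ), bR00 (bs m i) (bs n j) =
      ((n : ℂ) * ((i : ℂ) + q) - (m : ℂ) * ((j : ℂ) + q)) • bs (m + n) (i + j))
    (hR01 : ∀ (m l : ℤ) (i j : ℕ), bR01 (bs m i) (bs l j) =
      ((l : ℂ) * ((i : ℂ) + q) - (m : ℂ) * ((j : ℂ) + q / 2)) • bs (m + l) (i + j))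
    (hR11 : ∀ (l r : ℤ) (i j : ℕ), bR11 (bs l i) (bs r j) =
      (2 * q) • bs (l + r) (i + j))
    (hL00 : ∀ (m n : ℤ) (i j : ℕ), bL00 (bs m i) (bs n j) =
      ((n : ℂ) * ((i : ℂ) + q) - (m : ℂ) * ((j : ℂ) + q)) • bs (m + n) (i + j))
    (hL01 : ∀ (m k : ℤ) (i j : ℕ), bL01 (bs m i) (bs k j) =
      (((k : ℂ) + 1 / 2) * ((i : ℂ) + q) - (m : ℂ) * ((j : ℂ) + q / 2)) • bs (m + k) (i + j))
    (hL11 : ∀ (k k' : ℤ) (i j : ℕ), bL11 (bs k i) (bs k' j) =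
      (2 * q) • bs (k + k' + 1) (i + j)) :
    Function.Injective tau0 ∧ Function.Injective tau1 ∧
    (∀ (m n : ℤ) (i j : ℕ),
      tau0 (bL00 (bs m i) (bs n j)) = bR00 (tau0 (bs m i)) (tau0 (bs n j))) ∧
    (∀ (m k : ℤ) (i j : ℕ),
      tau1 (bL01 (bs m i) (bs k j)) = bR01 (tau0 (bs m i)) (tau1 (bs k j))) ∧
    (∀ (k k' : ℤ) (i j : ℕ),
      tau0 (bL11 (bs k i) (bs k' j)) = bR11 (tau1 (bs k i)) (tau1 (bs k' j))) := by
  refine ⟨?_, ?_, ?_, ?_, ?_⟩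
  · have h : Function.Injective (fun p : ℤ × ℕ => (2 * p.1, p.2)) := by
      intro p p' hpp
      simp only [Prod.mk.injEq] at hpp
      exact Prod.ext (by omega) hpp.2
    intro x y hxy
    have := Finsupp.mapDomain_injective h
      (smul_right_injective BlockSpan (by norm_num : (1/2 : ℂ) ≠ 0)
        (by simpa [tau0] using hxy))
    exact this
  · have h : Function.Injective (fun p : ℤ × ℕ => (2 * p.1 + 1, p.2)) := by
      intro p p' hpp
      simp only [Prod.mk.injEq] at hpp
      exact Prod.ext (by omega) hpp.2
    intro x y hxy
    exact Finsupp.mapDomain_injective h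
      (smul_right_injective BlockSpan (inv_ne_zero sqrt2_ne)
        (by simpa [tau1] using hxy))
  · intro m n i j
    rw [hL00, map_smul, tau0_bs, tau0_bs, tau0_bs, map_smul, LinearMap.map_smul₂, hR00]
    rw [smul_smul, smul_smul, smul_smul]
    congr 1
    · push_cast; ring
    · congr 1 <;> omega
  · intro m k i j
    rw [hL01, map_smul, tau1_bs, tau0_bs, tau1_bs, map_smul, LinearMap.map_smul₂, hR01]
    rw [smul_smul, smul_smul, smul_smul]
    congr 1
    · push_cast; ring
    · congr 1 <;> omega
  · intro k k' i j
    rw [hL11, map_smul, tau0_bs, tau1_bs, tau1_bs, map_smul, LinearMap.map_smul₂, hR11]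
    rw [smul_smul, smul_smul, smul_smul]
    congr 1
    · field_simp
      rw [sq, sqrt2_sq]
    · congr 1 <;> omega
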